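/- arXiv:1702.08384 — 2 statements merged into one kernel-verified Lean document; each statement's English description precedes it below -/
import Mathlib

section
/- With κ_y = [[I_n, B_y],[0, I_d]] as in the structure theorem for practical hidden sums with U(T_∘) = Span{e_{n+1},…,e_{n+d}}, for every v = (v_1,…,v_{n+d}) ∈ V one has B_v = Σ_{i=1}^n v_i B_{e_i}; in particular κ_v depends only on the first n coordinates of v. -/
open Matrix

/-- The upper unitriangular block matrix `[[I_n, B],[0, I_d]]` as an `(n+d) × (n+d)` matrix. -/
def blockUT (n d : ℕ) (B : Matrix (Fin n) (Fin d) (ZMod 2)) :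
    Matrix (Fin (n + d)) (Fin (n + d)) (ZMod 2) :=
  (Matrix.fromBlocks 1 B 0 1).submatrix finSumFinEquiv.symm finSumFinEquiv.symm

lemma blockUT_inj (n d : ℕ) {B C : Matrix (Fin n) (Fin d) (ZMod 2)}
    (h : blockUT n d B = blockUT n d C) : B = C := by
  ext i j
  have := congrFun (congrFun h (Fin.castAdd d i)) (Fin.natAdd n j)
  simpa [blockUT, Matrix.submatrix_apply] using this

lemma blockUT_mul (n d : ℕ) (B C : Matrix (Fin n) (Fin d) (ZMod 2)) :
    blockUT n d B * blockUT n d C = blockUT n d (B + C) := by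
  unfold blockUT
  rw [Matrix.submatrix_mul_equiv, Matrix.fromBlocks_multiply]
  simp [add_comm]

lemma blockUT_zero (n d : ℕ) : blockUT n d 0 = 1 := by
  unfold blockUT
  rw [show (Matrix.fromBlocks 1 (0 : Matrix (Fin n) (Fin d) (ZMod 2)) 0 1) = 1 from
    Matrix.fromBlocks_one, Matrix.submatrix_one_equiv]

lemma vecMul_blockUT_castAdd (n d : ℕ) (C : Matrix (Fin n) (Fin d) (ZMod 2))
    (x : Fin (n + d) → ZMod 2) (i : Fin n) :
    (x ᵥ* blockUT n d C) (Fin.castAdd d i) = x (Fin.castAdd d i) := by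
  rw [Matrix.vecMul, dotProduct]
  rw [← Equiv.sum_comp finSumFinEquiv
    (fun k => x k * blockUT n d C k (Fin.castAdd d i)), Fintype.sum_sum_type]
  simp [blockUT, Matrix.one_apply, Finset.sum_ite_eq', Matrix.submatrix_apply]

lemma vecMul_ext {m k : Type*} [Fintype m] [DecidableEq m] {M N : Matrix m k (ZMod 2)}
    (h : ∀ x : m → ZMod 2, x ᵥ* M = x ᵥ* N) : M = N := by
  ext i j
  have := congrFun (h (Pi.single i 1)) j
  simpa using this

/-- With `κ_v = [[I_n, B_v],[0, I_d]]` as in the structure theorem,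
`B_v = Σ_{i=1}^n v_i B_{e_i}`; in particular `κ_v` (i.e. `B_v`) depends only on the
first `n` coordinates of `v`. -/
theorem stmt5 (n d : ℕ) (hn : 2 ≤ n) (hd : 1 ≤ d)
    (T : Subgroup (Equiv.Perm (Fin (n + d) → ZMod 2)))
    (haff : ∀ g ∈ T, ∃ (L : (Fin (n + d) → ZMod 2) ≃ₗ[ZMod 2] (Fin (n + d) → ZMod 2))
      (c : Fin (n + d) → ZMod 2), ∀ x, g x = L x + c)
    (hreg : ∀ x y : Fin (n + d) → ZMod 2,
      ∃! g : Equiv.Perm (Fin (n + d) → ZMod 2), g ∈ T ∧ g x = y)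
    (hab : ∀ g ∈ T, ∀ h ∈ T, g * h = h * g)
    (helem : ∀ g ∈ T, g * g = 1)
    (τ : (Fin (n + d) → ZMod 2) → Equiv.Perm (Fin (n + d) → ZMod 2))
    (hτmem : ∀ a, τ a ∈ T) (hτ0 : ∀ a, τ a 0 = a)
    (B : (Fin (n + d) → ZMod 2) → Matrix (Fin n) (Fin d) (ZMod 2))
    (hB : ∀ v x, τ v x = x ᵥ* blockUT n d (B v) + v)
    (hU : ∀ v : Fin (n + d) → ZMod 2,
      (∀ x, τ v x = x + v) ↔ (∀ i : Fin (n + d), (i : ℕ) < n → v i = 0)) :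
    ∀ v : Fin (n + d) → ZMod 2,
      B v = ∑ i : Fin n,
        v (Fin.castAdd d i) • B (Pi.single (Fin.castAdd d i) (1 : ZMod 2)) ∧
      ∀ w : Fin (n + d) → ZMod 2,
        (∀ i : Fin n, v (Fin.castAdd d i) = w (Fin.castAdd d i)) → B v = B w := by
  -- τ composes as expected
  have hcomp : ∀ a b, B ((τ a) b) = B a + B b := by
    intro a b
    have hmul : τ a * τ b = τ (τ a b) := by
      obtain ⟨g, hg, hu⟩ := hreg 0 (τ a b)
      have h1 : τ a * τ b = g := hu _ ⟨T.mul_mem (hτmem a) (hτmem b), by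
        simp [Equiv.Perm.mul_apply, hτ0]⟩
      have h2 : τ (τ a b) = g := hu _ ⟨hτmem _, hτ0 _⟩
      rw [h1, h2]
    set M := B (τ a b) with hM
    have hx : ∀ x, x ᵥ* blockUT n d (B b + B a) = x ᵥ* blockUT n d M := by
      intro x
      have h := congrArg (fun g : Equiv.Perm (Fin (n + d) → ZMod 2) => g x) hmul
      simp only [Equiv.Perm.mul_apply] at h
      rw [hB b x, hB a, hB (τ a b) x, ← hM, hB a b] at h
      rw [Matrix.add_vecMul, Matrix.vecMul_vecMul, blockUT_mul, ← add_assoc] at h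
      exact add_right_cancel (add_right_cancel h)
    have h3 := blockUT_inj n d (vecMul_ext hx)
    rw [← h3]
    exact add_comm _ _
  -- B vanishes on vectors supported on the last d coordinates
  have hBzero : ∀ c, (∀ i : Fin (n + d), (i : ℕ) < n → c i = 0) → B c = 0 := by
    intro c hc
    have h := (hU c).mpr hc
    have hx : ∀ x, x ᵥ* blockUT n d (B c) = x ᵥ* blockUT n d 0 := by
      intro x
      have h1 : x ᵥ* blockUT n d (B c) + c = x + c := (hB c x).symm.trans (h x)
      have h2 := add_right_cancel h1
      rw [blockUT_zero, Matrix.vecMul_one]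
      exact h2
    exact blockUT_inj n d (vecMul_ext hx)
  -- translating by such a vector does not change B
  have hshift : ∀ w c, (∀ i : Fin (n + d), (i : ℕ) < n → c i = 0) → B (w + c) = B w := by
    intro w c hc
    have h1 : τ c w = w + c := (hU c).mpr hc w
    rw [← h1, hcomp c w, hBzero c hc, zero_add]
  -- additivity of B
  have hadd : ∀ a b, B (a + b) = B a + B b := by
    intro a b
    set t : Fin (n + d) → ZMod 2 := fun j => (b ᵥ* blockUT n d (B a)) j + b j with hT
    have ht : ∀ i : Fin (n + d), (i : ℕ) < n → t i = 0 := by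
      intro i hi
      have hieq : i = Fin.castAdd d ⟨(i : ℕ), hi⟩ := by apply Fin.ext; simp
      rw [hT, hieq]
      simp only [vecMul_blockUT_castAdd]
      exact (by decide : ∀ x : ZMod 2, x + x = 0) _
    have eqn : (a + b) + t = τ a b := by
      funext j
      rw [hB a b]
      show (a j + b j) + ((b ᵥ* blockUT n d (B a)) j + b j)
          = (b ᵥ* blockUT n d (B a)) j + a j
      exact (by decide : ∀ x y z : ZMod 2, (x + y) + (z + y) = z + x) _ _ _
    have h1 := hshift (a + b) t ht
    rw [eqn, hcomp a b] at h1
    exact h1.symm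
  have hzero : B 0 = 0 := by
    have := hadd 0 0
    rw [add_zero] at this
    exact (left_eq_add.mp this)
  have hsm : ∀ (c : ZMod 2) (u), B (c • u) = c • B u := by
    intro c u
    rcases (by decide : ∀ c : ZMod 2, c = 0 ∨ c = 1) c with h | h <;> subst h <;>
      simp [hzero]
  have hmain : ∀ v : Fin (n + d) → ZMod 2,
      B v = ∑ i : Fin n,
        v (Fin.castAdd d i) • B (Pi.single (Fin.castAdd d i) (1 : ZMod 2)) := by
    intro v
    set s : Fin (n + d) → ZMod 2 :=
      ∑ i : Fin n, v (Fin.castAdd d i) • Pi.single (Fin.castAdd d i) (1 : ZMod 2) with hs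
    have hsval : ∀ i : Fin n, s (Fin.castAdd d i) = v (Fin.castAdd d i) := by
      intro i
      rw [hs]
      rw [Finset.sum_apply]
      have : ∀ j : Fin n,
          ((v (Fin.castAdd d j) • Pi.single (Fin.castAdd d j) (1 : ZMod 2) :
            Fin (n + d) → ZMod 2))
            (Fin.castAdd d i)
          = if j = i then v (Fin.castAdd d i) else 0 := by
        intro j
        by_cases hji : j = i
        · subst hji; simp
        · have : Fin.castAdd d i ≠ Fin.castAdd d j := by
            intro hcon
            exact hji (by
              apply Fin.ext
              simpa [Fin.ext_iff] using hcon.symm)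
          simp [Pi.single_apply, this, hji]
      rw [Finset.sum_congr rfl (fun j _ => this j)]
      simp
    have hr : ∀ i : Fin (n + d), (i : ℕ) < n → (v + s) i = 0 := by
      intro i hi
      have hieq : i = Fin.castAdd d ⟨(i : ℕ), hi⟩ := by apply Fin.ext; simp
      rw [hieq]
      show v _ + s _ = 0
      rw [hsval ⟨(i : ℕ), hi⟩]
      exact (by decide : ∀ x : ZMod 2, x + x = 0) _
    have hv : v = s + (v + s) := by
      funext j
      show v j = s j + (v j + s j)
      exact (by decide : ∀ x y : ZMod 2, x = y + (x + y)) _ _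
    calc B v = B (s + (v + s)) := by rw [← hv]
      _ = B s := hshift s (v + s) hr
      _ = ∑ i : Fin n,
            B (v (Fin.castAdd d i) • Pi.single (Fin.castAdd d i) (1 : ZMod 2)) := by
          rw [hs]
          exact map_sum (AddMonoidHom.mk' B hadd) _ _
      _ = ∑ i : Fin n,
            v (Fin.castAdd d i) • B (Pi.single (Fin.castAdd d i) (1 : ZMod 2)) :=
          Finset.sum_congr rfl fun i _ => hsm _ _
  intro v
  refine ⟨hmain v, ?_⟩
  intro w hw
  rw [hmain v, hmain w]
  exact Finset.sum_congr rfl fun i _ => by rw [hw i]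
end

section
/- For n = 3, the number of 3×3 symmetric zero-diagonal matrices over F_{2^d} that are full rank over F_2 equals (2^d + 3)(2^d − 1)(2^d − 2). -/
set_option linter.unusedSectionVars false
set_option maxHeartbeats 1000000

section aux

variable {F : Type} [Field F] [Algebra (ZMod 2) F]

private lemma two_eq_zero' : (2:F) = 0 := by
  have h := map_natCast (algebraMap (ZMod 2) F) 2
  have h2 : ((2:ℕ) : ZMod 2) = 0 := by decide
  rw [h2, map_zero] at h
  simpa using h.symm

private lemma add_self_eq' (a : F) : a + a = 0 := by
  rw [← two_mul, two_eq_zero', zero_mul]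

private def mat' (x y z : F) : Matrix (Fin 3) (Fin 3) F := !![0,y,z; y,0,x; z,x,0]

private lemma row0' (x y z : F) : mat' x y z 0 = ![0,y,z] := rfl
private lemma row1' (x y z : F) : mat' x y z 1 = ![y,0,x] := rfl
private lemma row2' (x y z : F) : mat' x y z 2 = ![z,x,0] := rfl

private def P' (x y z : F) : Prop :=
  (¬(y=0∧z=0)) ∧ (¬(x=0∧y=0)) ∧ (¬(x=0∧z=0)) ∧ (¬(y=0∧x=z)) ∧ (¬(z=0∧x=y)) ∧
    (¬(x=0∧y=z)) ∧ (¬(x=y∧y=z))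

private lemma li_iff' (x y z : F) :
    LinearIndependent (ZMod 2) (fun i => mat' x y z i) ↔ P' x y z := by
  have hzo : ∀ c : ZMod 2, c = 0 ∨ c = 1 := by decide
  constructor
  · intro h
    rw [Fintype.linearIndependent_iff] at h
    refine ⟨?_, ?_, ?_, ?_, ?_, ?_, ?_⟩
    · rintro ⟨h1, h2⟩
      have := h ![1,0,0] (by
        rw [Fin.sum_univ_three, row0', row1', row2']
        norm_num [h1, h2, add_self_eq']
        all_goals exact ⟨by simp [h1, h2, add_self_eq'], funext fun j => Fin.elim0 j⟩) 0
      simp at this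
    · rintro ⟨h1, h2⟩
      have := h ![0,1,0] (by
        rw [Fin.sum_univ_three, row0', row1', row2']
        norm_num [h1, h2, add_self_eq']
        all_goals exact ⟨by simp [h1, h2, add_self_eq'], funext fun j => Fin.elim0 j⟩) 1
      simp at this
    · rintro ⟨h1, h2⟩
      have := h ![0,0,1] (by
        rw [Fin.sum_univ_three, row0', row1', row2']
        norm_num [h1, h2, add_self_eq']
        all_goals exact funext fun j => j.elim0) 2
      simp at this
    · rintro ⟨h1, h2⟩
      have := h ![1,1,0] (by
        rw [Fin.sum_univ_three, row0', row1', row2']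
        norm_num [h1, h2, add_self_eq']
        all_goals exact ⟨by simp [h1, h2, add_self_eq'], funext fun j => Fin.elim0 j⟩) 0
      simp at this
    · rintro ⟨h1, h2⟩
      have := h ![1,0,1] (by
        rw [Fin.sum_univ_three, row0', row1', row2']
        norm_num [h1, h2, add_self_eq']
        all_goals exact ⟨by simp [h1, h2, add_self_eq'], funext fun j => Fin.elim0 j⟩) 0
      simp at this
    · rintro ⟨h1, h2⟩
      have := h ![0,1,1] (by
        rw [Fin.sum_univ_three, row0', row1', row2']
        norm_num [h1, h2, add_self_eq']
        all_goals exact ⟨by simp [h1, h2, add_self_eq'], funext fun j => Fin.elim0 j⟩) 1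
      simp at this
    · rintro ⟨h1, h2⟩
      have := h ![1,1,1] (by
        rw [Fin.sum_univ_three, row0', row1', row2']
        norm_num [h1, h2, add_self_eq']
        all_goals exact ⟨by simp [h1, h2, add_self_eq'], funext fun j => Fin.elim0 j⟩) 0
      simp at this
  · rintro ⟨p1, p2, p3, p4, p5, p6, p7⟩
    rw [Fintype.linearIndependent_iff]
    intro g hg
    rw [Fin.sum_univ_three, row0', row1', row2'] at hg
    have e0 := congrFun hg 0
    have e1 := congrFun hg 1
    have e2 := congrFun hg 2
    rcases hzo (g 0) with h0 | h0 <;> rcases hzo (g 1) with h1 | h1 <;>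
      rcases hzo (g 2) with h2 | h2
    · intro i; fin_cases i <;> assumption
    all_goals exfalso
    all_goals simp [h0, h1, h2] at e0 e1 e2
    · exact p3 ⟨by linear_combination e1, by linear_combination e0⟩
    · exact p2 ⟨by linear_combination e2, by linear_combination e0⟩
    · exact p6 ⟨e1, by linear_combination e0 - add_self_eq' z⟩
    · exact p1 ⟨by linear_combination e1, by linear_combination e2⟩
    · exact p5 ⟨e0, by linear_combination e1 - add_self_eq' y⟩
    · exact p4 ⟨e0, by linear_combination e2 - add_self_eq' z⟩
    · exact p7 ⟨by linear_combination e1 - add_self_eq' y,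
        by linear_combination e0 - add_self_eq' z⟩

omit [Algebra (ZMod 2) F] in
private lemma P_iff' (x y z : F) :
    P' x y z ↔ ((x≠0 ∧ y≠0 ∧ z≠0 ∧ ¬(x=y ∧ y=z)) ∨ (x = 0 ∧ y≠0 ∧ z≠0 ∧ y≠z)
      ∨ (y = 0 ∧ x≠0 ∧ z≠0 ∧ x≠z) ∨ (z = 0 ∧ x≠0 ∧ y≠0 ∧ x≠y)) := by
  unfold P'
  constructor
  · rintro ⟨p1, p2, p3, p4, p5, p6, p7⟩
    by_cases hx : x = 0
    · subst hx
      right; left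
      refine ⟨rfl, fun h => p2 ⟨rfl, h⟩, fun h => p3 ⟨rfl, h⟩, fun h => p6 ⟨rfl, h⟩⟩
    · by_cases hy : y = 0
      · subst hy
        right; right; left
        refine ⟨rfl, hx, fun h => p1 ⟨rfl, h⟩, fun h => p4 ⟨rfl, h⟩⟩
      · by_cases hz : z = 0
        · subst hz
          right; right; right
          exact ⟨rfl, hx, hy, fun h => p5 ⟨rfl, h⟩⟩
        · exact Or.inl ⟨hx, hy, hz, p7⟩
  · rintro (⟨hx, hy, hz, h⟩ | ⟨rfl, hy, hz, h⟩ | ⟨rfl, hx, hz, h⟩ | ⟨rfl, hx, hy, h⟩)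
    · exact ⟨fun q => hy q.1, fun q => hx q.1, fun q => hx q.1, fun q => hy q.1,
        fun q => hz q.1, fun q => hx q.1, h⟩
    · exact ⟨fun q => hy q.1, fun q => hy q.2, fun q => hz q.2, fun q => hy q.1,
        fun q => hz q.1, fun q => h q.2, fun q => h q.2⟩
    · exact ⟨fun q => hz q.2, fun q => hx q.1, fun q => hx q.1, fun q => h q.2,
        fun q => hz q.1, fun q => hx q.1, fun q => hx q.1⟩
    · exact ⟨fun q => hy q.1, fun q => hx q.1, fun q => hx q.1, fun q => hy q.1,
        fun q => h q.2, fun q => hx q.1, fun q => h q.1⟩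

private lemma eq_mat' (M : Matrix (Fin 3) (Fin 3) F) (hs : M.IsSymm) (hd : ∀ i, M i i = 0) :
    M = mat' (M 1 2) (M 0 1) (M 0 2) := by
  ext i j
  fin_cases i <;> fin_cases j <;>
    simp [mat'] <;>
    first
      | exact hd _
      | rfl
      | exact hs.apply _ _

private def matEquiv' : {M : Matrix (Fin 3) (Fin 3) F //
      M.IsSymm ∧ (∀ i, M i i = 0) ∧ LinearIndependent (ZMod 2) (fun i => M i)} ≃
    {p : F × F × F // LinearIndependent (ZMod 2) (fun i => mat' p.1 p.2.1 p.2.2 i)} where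
  toFun M := ⟨(M.1 1 2, M.1 0 1, M.1 0 2), by
    have h := M.2.2.2
    rw [eq_mat' M.1 M.2.1 M.2.2.1] at h
    exact h⟩
  invFun p := ⟨mat' p.1.1 p.1.2.1 p.1.2.2,
    by constructor
       · ext i j; fin_cases i <;> fin_cases j <;> simp [mat']
       · refine ⟨fun i => ?_, p.2⟩
         fin_cases i <;> simp [mat']⟩
  left_inv M := by
    ext : 1
    exact (eq_mat' M.1 M.2.1 M.2.2.1).symm
  right_inv p := by
    ext : 1
    simp [mat']

private lemma count_P' (F : Type) [Field F] [Fintype F] :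
    Nat.card {p : F × F × F // P' p.1 p.2.1 p.2.2}
      = (Fintype.card F + 3) * (Fintype.card F - 1) * (Fintype.card F - 2) := by
  classical
  obtain ⟨k, hk⟩ : ∃ k, Fintype.card F = k + 2 :=
    ⟨Fintype.card F - 2, by have := Fintype.one_lt_card (α := F); omega⟩
  set N : Finset F := Finset.univ.erase 0 with hNdef
  have hN : N.card = k + 1 := by
    rw [hNdef, Finset.card_erase_of_mem (Finset.mem_univ 0), Finset.card_univ, hk]
    omega
  have hmemN : ∀ a : F, a ∈ N ↔ a ≠ 0 := by simp [hNdef]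
  set D : Finset (F×F×F) := N.image (fun t => (t,t,t)) with hDdef
  set A : Finset (F×F×F) := (N ×ˢ N ×ˢ N) \ D with hAdef
  set B0 : Finset (F×F×F) := N.offDiag.image (fun ab => ((0:F), ab.1, ab.2)) with hB0def
  set B1 : Finset (F×F×F) := N.offDiag.image (fun ab => (ab.1, (0:F), ab.2)) with hB1def
  set B2 : Finset (F×F×F) := N.offDiag.image (fun ab => (ab.1, ab.2, (0:F))) with hB2def
  have hD : D.card = k + 1 := by
    rw [hDdef, Finset.card_image_of_injective _ (fun a b h => congrArg Prod.fst h), hN]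
  have hDsub : D ⊆ N ×ˢ N ×ˢ N := by
    intro p hp
    rw [hDdef, Finset.mem_image] at hp
    obtain ⟨t, ht, rfl⟩ := hp
    simp [Finset.mem_product, ht]
  have hA : A.card = (k+1)*k*(k+2) := by
    rw [hAdef, Finset.card_sdiff_of_subset hDsub, Finset.card_product, Finset.card_product, hN, hD]
    have e : (k+1)*((k+1)*(k+1)) = (k+1)*k*(k+2) + (k+1) := by ring
    omega
  have hoff : N.offDiag.card = (k+1) * k := by
    rw [Finset.offDiag_card, hN]
    have e : (k+1)*(k+1) = (k+1)*k + (k+1) := by ring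
    omega
  have hinj0 : Set.InjOn (fun ab : F × F => ((0:F), ab.1, ab.2)) N.offDiag := by
    intro a _ b _ h; simp [Prod.ext_iff] at h; exact Prod.ext h.1 h.2
  have hinj1 : Set.InjOn (fun ab : F × F => (ab.1, (0:F), ab.2)) N.offDiag := by
    intro a _ b _ h; simp [Prod.ext_iff] at h; exact Prod.ext h.1 h.2
  have hinj2 : Set.InjOn (fun ab : F × F => (ab.1, ab.2, (0:F))) N.offDiag := by
    intro a _ b _ h; simp [Prod.ext_iff] at h; exact Prod.ext h.1 h.2
  have hB0 : B0.card = (k+1)*k := by rw [hB0def, Finset.card_image_of_injOn hinj0, hoff]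
  have hB1 : B1.card = (k+1)*k := by rw [hB1def, Finset.card_image_of_injOn hinj1, hoff]
  have hB2 : B2.card = (k+1)*k := by rw [hB2def, Finset.card_image_of_injOn hinj2, hoff]
  have mA : ∀ x y z : F, (x,y,z) ∈ A ↔ (x≠0 ∧ y≠0 ∧ z≠0 ∧ ¬(x=y ∧ y=z)) := by
    intro x y z
    rw [hAdef, Finset.mem_sdiff, Finset.mem_product, Finset.mem_product, hDdef,
      Finset.mem_image]
    simp only [hmemN, Prod.mk.injEq]
    constructor
    · rintro ⟨⟨hx, hy, hz⟩, hnd⟩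
      exact ⟨hx, hy, hz, fun q => hnd ⟨x, hx, rfl, q.1, q.1.trans q.2⟩⟩
    · rintro ⟨hx, hy, hz, hne⟩
      refine ⟨⟨hx, hy, hz⟩, ?_⟩
      rintro ⟨t, ht, rfl, h2, h3⟩
      exact hne ⟨h2, h2.symm.trans h3⟩
  have mB0 : ∀ x y z : F, (x,y,z) ∈ B0 ↔ (x = 0 ∧ y≠0 ∧ z≠0 ∧ y≠z) := by
    intro x y z
    rw [hB0def, Finset.mem_image]
    constructor
    · rintro ⟨⟨a,b⟩, hab, heq⟩
      rw [Finset.mem_offDiag] at hab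
      obtain ⟨ha, hb, hne⟩ := hab
      obtain ⟨h1, h2, h3⟩ : (0:F) = x ∧ a = y ∧ b = z := by
        simpa [Prod.ext_iff] using heq
      subst h1; subst h2; subst h3
      exact ⟨rfl, (hmemN _).1 ha, (hmemN _).1 hb, hne⟩
    · rintro ⟨rfl, hy, hz, hne⟩
      exact ⟨(y,z), Finset.mem_offDiag.2 ⟨(hmemN _).2 hy, (hmemN _).2 hz, hne⟩, rfl⟩
  have mB1 : ∀ x y z : F, (x,y,z) ∈ B1 ↔ (y = 0 ∧ x≠0 ∧ z≠0 ∧ x≠z) := by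
    intro x y z
    rw [hB1def, Finset.mem_image]
    constructor
    · rintro ⟨⟨a,b⟩, hab, heq⟩
      rw [Finset.mem_offDiag] at hab
      obtain ⟨ha, hb, hne⟩ := hab
      obtain ⟨h1, h2, h3⟩ : a = x ∧ (0:F) = y ∧ b = z := by
        simpa [Prod.ext_iff] using heq
      subst h1; subst h2; subst h3
      exact ⟨rfl, (hmemN _).1 ha, (hmemN _).1 hb, hne⟩
    · rintro ⟨rfl, hx, hz, hne⟩
      exact ⟨(x,z), Finset.mem_offDiag.2 ⟨(hmemN _).2 hx, (hmemN _).2 hz, hne⟩, rfl⟩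
  have mB2 : ∀ x y z : F, (x,y,z) ∈ B2 ↔ (z = 0 ∧ x≠0 ∧ y≠0 ∧ x≠y) := by
    intro x y z
    rw [hB2def, Finset.mem_image]
    constructor
    · rintro ⟨⟨a,b⟩, hab, heq⟩
      rw [Finset.mem_offDiag] at hab
      obtain ⟨ha, hb, hne⟩ := hab
      obtain ⟨h1, h2, h3⟩ : a = x ∧ b = y ∧ (0:F) = z := by
        simpa [Prod.ext_iff] using heq
      subst h1; subst h2; subst h3
      exact ⟨rfl, (hmemN _).1 ha, (hmemN _).1 hb, hne⟩
    · rintro ⟨rfl, hx, hy, hne⟩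
      exact ⟨(x,y), Finset.mem_offDiag.2 ⟨(hmemN _).2 hx, (hmemN _).2 hy, hne⟩, rfl⟩
  have hunion : (Finset.univ.filter fun p : F × F × F => P' p.1 p.2.1 p.2.2)
      = A ∪ B0 ∪ B1 ∪ B2 := by
    ext ⟨x, y, z⟩
    rw [Finset.mem_filter, Finset.mem_union, Finset.mem_union, Finset.mem_union,
      mA, mB0, mB1, mB2]
    simp only [Finset.mem_univ, true_and]
    rw [P_iff' x y z]
    tauto
  have d3 : Disjoint A B0 := by
    rw [Finset.disjoint_left]
    rintro ⟨x,y,z⟩ hp hp2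
    exact ((mA x y z).1 hp).1 ((mB0 x y z).1 hp2).1
  have d2 : Disjoint (A ∪ B0) B1 := by
    rw [Finset.disjoint_left]
    rintro ⟨x,y,z⟩ hp hp2
    rw [Finset.mem_union] at hp
    rcases hp with h | h
    · exact ((mA x y z).1 h).2.1 ((mB1 x y z).1 hp2).1
    · exact ((mB1 x y z).1 hp2).2.1 ((mB0 x y z).1 h).1
  have d1 : Disjoint (A ∪ B0 ∪ B1) B2 := by
    rw [Finset.disjoint_left]
    rintro ⟨x,y,z⟩ hp hp2
    rw [Finset.mem_union, Finset.mem_union] at hp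
    rcases hp with (h | h) | h
    · exact ((mA x y z).1 h).2.2.1 ((mB2 x y z).1 hp2).1
    · exact ((mB0 x y z).1 h).2.2.1 ((mB2 x y z).1 hp2).1
    · exact ((mB1 x y z).1 h).2.2.1 ((mB2 x y z).1 hp2).1
  have hcard : Nat.card {p : F × F × F // P' p.1 p.2.1 p.2.2}
      = (Finset.univ.filter fun p : F × F × F => P' p.1 p.2.1 p.2.2).card := by
    rw [Nat.card_eq_fintype_card, Fintype.card_subtype]
  rw [hcard, hunion, Finset.card_union_of_disjoint d1, Finset.card_union_of_disjoint d2,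
    Finset.card_union_of_disjoint d3, hA, hB0, hB1, hB2, hk]
  have e1 : k + 2 - 1 = k + 1 := by omega
  have e2 : k + 2 - 2 = k := by omega
  rw [e1, e2]
  ring

end aux

/-- The number of `3 × 3` symmetric zero-diagonal matrices over `F_{2^d}`
that are full rank over `F₂` equals `(2^d + 3)(2^d - 1)(2^d - 2)`. -/
theorem stmt11 (d : ℕ) (hd : 1 ≤ d)
    (F : Type) [Field F] [Fintype F] [Algebra (ZMod 2) F]
    (hF : Fintype.card F = 2 ^ d) :
    Nat.card {M : Matrix (Fin 3) (Fin 3) F //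
        M.IsSymm ∧ (∀ i, M i i = 0) ∧
        LinearIndependent (ZMod 2) (fun i => M i)}
      = (2 ^ d + 3) * (2 ^ d - 1) * (2 ^ d - 2) := by
  classical
  rw [Nat.card_congr (matEquiv' (F := F))]
  rw [Nat.card_congr (Equiv.subtypeEquivRight
    (fun p : F × F × F => li_iff' p.1 p.2.1 p.2.2))]
  rw [count_P' F, hF]
end
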